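/- Let k ≥ 3 be an integer, let X be a set with k elements, and let F be a field of characteristic different from 2. The inclusion matrix over F whose rows are indexed by the subsets of X of size k−1 and whose columns are indexed by the subsets of X of size k−2, with (C, A) entry equal to 1 if A ⊆ C and 0 otherwise, has rank k, i.e., full row rank. -/

import Mathlib

open Finset

variable {F : Type*} [Field F]

/-- An *arc*: every `k`-subset is a set of linearly independent vectors
(hence a basis of `F^k`). -/
def IsArc {k : ℕ} (S : Set (Fin k → F)) : Prop :=
  ∀ T : Finset (Fin k → F), ↑T ⊆ S → T.card = k →
    LinearIndependent F (Subtype.val : {x // x ∈ T} → (Fin k → F))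

/-- The *weight* of a vector: its number of nonzero coordinates. -/
noncomputable def weight {ι : Type*} (w : ι → F) : ℕ := Nat.card {i // w i ≠ 0}

/-- `det(u, C)`: the determinant of the `k × k` matrix whose first row is `u` and whose
remaining rows are the vectors `g i`, `i ∈ C`, listed in increasing order of the index set. -/
noncomputable def detWith {k m : ℕ} (g : Fin m → Fin k → F)
    (u : Fin k → F) (C : Finset (Fin m)) : F :=
  if h : C.card + 1 = k then
    Matrix.det (Matrix.of ((Fin.cons u fun j => g (C.orderEmbOfFin rfl j)) ∘ Fin.cast h.symm))
  else 0

/-- The matrix `M_n` associated to an ordered arc `g : Fin m → (Fin k → F)`. -/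
noncomputable def arcMatrix {k m : ℕ} (g : Fin m → Fin k → F) (n : ℕ) :
    Matrix {C : Finset (Fin m) // C.card = k - 1}
      {AE : Finset (Fin m) × Finset (Fin m) //
        AE.2.card = m - n ∧ AE.1 ⊆ AE.2 ∧ AE.1.card = k - 2} F :=
  fun C AE =>
    if AE.1.1 ⊆ C.1 then ∏ u ∈ Finset.univ \ AE.1.2, detWith g (g u) C.1 else 0

/-- `det(z, Y₁, …, Y_{k-1})`. -/
noncomputable def detRows {k : ℕ} (z : Fin k → F) (Y : Fin (k - 1) → Fin k → F) : F :=
  if h : k - 1 + 1 = k then Matrix.det (Matrix.of ((Fin.cons z Y) ∘ Fin.cast h.symm)) else 0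

/-- `d_A(u,v) = det(u, v, p₁, …, p_{k-2})` for an ordered tuple `A = (p₁, …, p_{k-2})`. -/
noncomputable def dA {k : ℕ} (p : Fin (k - 2) → Fin k → F) (u v : Fin k → F) : F :=
  if h : k - 2 + 1 + 1 = k then
    Matrix.det (Matrix.of ((Fin.cons u (Fin.cons v p)) ∘ Fin.cast h.symm))
  else 0

/-- `f` is a tangent polynomial for the `(k-2)`-subset `A` of the arc `S`:
a product of `t` pairwise linearly independent linear forms whose kernels meet `S` in `A`. -/
def IsTangentPoly {k : ℕ} (t : ℕ) (S A : Set (Fin k → F)) (f : (Fin k → F) → F) : Prop :=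
  ∃ α : Fin t → ((Fin k → F) →ₗ[F] F),
    (∀ i j, i ≠ j → LinearIndependent F ![α i, α j]) ∧
    (∀ i, S ∩ {x | α i x = 0} = A) ∧
    ∀ x, f x = ∏ i, α i x

/-- Compatible families `(α_A)` (on `(k-2)`-subsets) and `(α_C)` (on `(k-1)`-subsets)
of nonzero scalars, relative to the tangent polynomials `f`. -/
def CompatibleFamilies {k m : ℕ} (t : ℕ) (g : Fin m → Fin k → F)
    (f : Finset (Fin m) → (Fin k → F) → F) (a c : Finset (Fin m) → F) : Prop :=
  (∀ A : Finset (Fin m), A.card = k - 2 → a A ≠ 0) ∧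
  (∀ C : Finset (Fin m), C.card = k - 1 → c C ≠ 0) ∧
  ∀ A : Finset (Fin m), A.card = k - 2 → ∀ e, e ∉ A →
    c (insert e A) =
      (-1 : F) ^ ((A.filter fun i => e < i).card * (t + 1)) * a A * f A (g e)

/-- The polynomial `φ(Y₁, …, Y_{k-1}) = Σ_C (α_C)^e ∏_{z ∈ E∖C} det(z,Y)/det(z,C)`. -/
noncomputable def phiPoly {k M : ℕ} (e : ℕ) (g : Fin M → Fin k → F)
    (c : Finset (Fin M) → F) (E : Finset (Fin M)) (Y : Fin (k - 1) → Fin k → F) : F :=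
  ∑ C ∈ E.powersetCard (k - 1), (c C) ^ e *
    ∏ z ∈ E \ C, detRows (g z) Y / detWith g (g z) C

/-- `(G, n)` has *Property W*. -/
def PropertyW {k m : ℕ} (g : Fin m → Fin k → F) (n : ℕ) : Prop :=
  ∀ A : Finset (Fin m), A.card = k - 2 →
    ∃ (C : Finset (Fin m)) (Cs : Fin (m - n - k + 1) → Finset (Fin m)),
      C.card = k - 1 ∧ A ⊆ C ∧
      (∀ i, (Cs i).card = k - 1 ∧ A ⊆ Cs i ∧ Cs i ≠ C) ∧
      Function.Injective Cs ∧
      ∀ i, ∃ x, ∀ D : {C : Finset (Fin m) // C.card = k - 1},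
        ((arcMatrix g n).mulVec x) D ≠ 0 ↔ (D.1 = C ∨ D.1 = Cs i)

theorem stmt17 {X : Type*} [Fintype X] [DecidableEq X] {k : ℕ} (hk : 3 ≤ k)
    (hX : Fintype.card X = k) (K : Type*) [Field K] (hchar : ringChar K ≠ 2) :
    Matrix.rank (Matrix.of fun (C : {C : Finset X // C.card = k - 1})
        (A : {A : Finset X // A.card = k - 2}) =>
      if A.1 ⊆ C.1 then (1 : K) else 0) = k := by
  have hcard : ∀ x : X, (univ.erase x).card = k - 1 := by
    intro x; rw [card_erase_of_mem (mem_univ x), card_univ, hX]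
  have hrep : ∀ C : Finset X, C.card = k - 1 → ∃ x : X, C = univ.erase x := by
    intro C hC
    have h1 : (univ \ C).card = 1 := by
      rw [card_sdiff_of_subset (subset_univ C), card_univ, hX, hC]; omega
    obtain ⟨x, hx⟩ := card_eq_one.1 h1
    have hxC : x ∉ C := by
      have : x ∈ univ \ C := hx ▸ mem_singleton_self x
      exact (mem_sdiff.1 this).2
    refine ⟨x, ?_⟩
    apply eq_of_subset_of_card_le
    · intro a ha
      exact mem_erase.2 ⟨fun h => hxC (h ▸ ha), mem_univ a⟩
    · rw [hcard, hC]
  have hbij : Function.Bijective (fun x : X =>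
      (⟨univ.erase x, hcard x⟩ : {C : Finset X // C.card = k - 1})) := by
    constructor
    · intro a b hab
      by_contra hne
      have : a ∈ univ.erase b := mem_erase.2 ⟨hne, mem_univ a⟩
      rw [← show univ.erase a = univ.erase b from congrArg Subtype.val hab] at this
      exact (notMem_erase a univ) this
    · rintro ⟨C, hC⟩
      obtain ⟨x, hx⟩ := hrep C hC
      exact ⟨x, Subtype.ext hx.symm⟩
  have hli : LinearIndependent K (fun (C : {C : Finset X // C.card = k - 1})
      (A : {A : Finset X // A.card = k - 2}) => if A.1 ⊆ C.1 then (1 : K) else 0) := by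
    rw [Fintype.linearIndependent_iff]
    intro g hg C
    set u : X → K := fun x => g ⟨univ.erase x, hcard x⟩ with hu
    have key : ∀ y z : X, y ≠ z → u y + u z = 0 := by
      intro y z hyz
      have hA : ((univ.erase y).erase z).card = k - 2 := by
        rw [card_erase_of_mem (mem_erase.2 ⟨hyz.symm, mem_univ z⟩), hcard]
        omega
      have h0 := congrFun hg ⟨(univ.erase y).erase z, hA⟩
      simp only [Finset.sum_apply, Pi.smul_apply, smul_eq_mul, Pi.zero_apply] at h0
      rw [← Fintype.sum_bijective _ hbij _ _ (fun x => rfl)] at h0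
      have hsub : ∀ x : X, ((univ.erase y).erase z ⊆ univ.erase x) ↔ (x = y ∨ x = z) := by
        intro x
        rw [subset_erase]
        constructor
        · rintro ⟨h1, h2⟩
          by_contra hc
          push_neg at hc
          exact h2 (mem_erase.2 ⟨fun h => hc.2 h, mem_erase.2 ⟨fun h => hc.1 h, mem_univ x⟩⟩)
        · rintro (rfl | rfl)
          · exact ⟨subset_univ _, fun h => (notMem_erase x univ) (mem_of_mem_erase h)⟩
          · exact ⟨subset_univ _, fun h => (notMem_erase x _) h⟩
      have hsplit : ∀ x : X, (if ((univ.erase y).erase z : Finset X) ⊆ univ.erase x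
          then (1:K) else 0) = (if x = y then (1:K) else 0) + (if x = z then 1 else 0) := by
        intro x
        rw [if_congr (hsub x) rfl rfl]
        by_cases h1 : x = y <;> by_cases h2 : x = z <;> simp_all
      simp only [hsplit, mul_add, Finset.sum_add_distrib, mul_ite, mul_one, mul_zero] at h0
      rw [Finset.sum_ite_eq' univ y, Finset.sum_ite_eq' univ z] at h0
      simpa using h0
    obtain ⟨x, hx⟩ := hrep C.1 C.2
    have hgC : g C = u x := by
      have : C = ⟨univ.erase x, hcard x⟩ := Subtype.ext hx
      rw [this]
    rw [hgC]
    -- pick y z distinct from x and each other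
    have h2 : 1 < (univ.erase x).card := by rw [hcard]; omega
    obtain ⟨y, hy⟩ := card_pos.1 (by omega : 0 < (univ.erase x).card)
    have h3 : 0 < ((univ.erase x).erase y).card := by
      rw [card_erase_of_mem hy]; omega
    obtain ⟨z, hz⟩ := card_pos.1 h3
    have hxy : x ≠ y := fun h => (notMem_erase x univ) (h ▸ hy)
    have hyz : y ≠ z := fun h => (mem_erase.1 hz).1 h.symm
    have hxz : x ≠ z := fun h => (mem_erase.1 (mem_of_mem_erase hz)).1 h.symm
    have e1 := key x y hxy
    have e2 := key x z hxz
    have e3 := key y z hyz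
    have h2u : (2 : K) * u x = 0 := by ring_nf; linear_combination e1 + e2 - e3
    exact (mul_eq_zero.1 h2u).resolve_left (Ring.two_ne_zero hchar)
  rw [show (Matrix.of fun (C : {C : Finset X // C.card = k - 1})
      (A : {A : Finset X // A.card = k - 2}) =>
      if A.1 ⊆ C.1 then (1 : K) else 0) = fun C A => if A.1 ⊆ C.1 then (1 : K) else 0 from rfl,
    (LinearIndependent.rank_matrix (M := ((fun C A => if A.1 ⊆ C.1 then (1 : K) else 0) :
      Matrix {C : Finset X // C.card = k - 1} {A : Finset X // A.card = k - 2} K)) hli), Fintype.card_finset_len, hX,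
    Nat.choose_symm (by omega : 1 ≤ k), Nat.choose_one_right]
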